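/- arXiv:2206.02016 — 2 statements merged into one kernel-verified Lean document; each statement's English description precedes it below -/
import Mathlib

section
/- For every real c > 1 there exist a natural number k, exponents t_1, ..., t_k with 1 ≤ t_1 < t_2 < ... < t_k < c, and nonnegative-order power functions f_1, ..., f_k (each f_i(b) = C_i·b^{s_i} with C_i > 0 and 0 ≤ s_i < c), such that for all b, w ≥ 0: (b+w)^c - b^c - w^c ≤ Σ_{i=1}^{k} f_i(b)·w^{t_i}. -/
open Real

lemma key_aux {c : ℝ} (hc : 1 ≤ c) {b w : ℝ} (hb : 0 ≤ b) (hw : 0 ≤ w) :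
    (b + w) ^ c - b ^ c ≤ c * (b + w) ^ (c - 1) * w := by
  rcases eq_or_lt_of_le (by linarith : (0:ℝ) ≤ b + w) with h | ha
  · have hb0 : b = 0 := by linarith
    have hw0 : w = 0 := by linarith
    simp [← h, hb0, hw0, Real.zero_rpow (by linarith : c ≠ 0)]
  · set a := b + w with hadef
    have hs : -1 ≤ -(w / a) := by
      rw [neg_le_neg_iff]
      exact div_le_one_of_le₀ (by linarith) ha.le
    have hB := one_add_mul_self_le_rpow_one_add hs hc
    have h1 : (1 : ℝ) + -(w / a) = b / a := by
      rw [eq_div_iff ha.ne', add_mul, neg_mul, div_mul_cancel₀ _ ha.ne', hadef]; ring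
    rw [h1] at hB
    have hac : (0:ℝ) < a ^ c := Real.rpow_pos_of_pos ha c
    have hdiv : (b / a) ^ c = b ^ c / a ^ c := Real.div_rpow hb ha.le c
    have h2 : a ^ c = a ^ (c - 1) * a := by
      rw [← Real.rpow_add_one ha.ne' (c-1)]; ring_nf
    have h3 := mul_le_mul_of_nonneg_right hB hac.le
    rw [hdiv, div_mul_cancel₀ _ hac.ne'] at h3
    have : (1 + c * -(w / a)) * a ^ c = a ^ c - c * a ^ (c-1) * w := by
      rw [h2]; field_simp; ring
    rw [this] at h3
    linarith

lemma key2 {c : ℝ} (hc : 1 ≤ c) {b w : ℝ} (hb : 0 ≤ b) (hw : 0 ≤ w) (hwb : w ≤ b) :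
    (b + w) ^ c - b ^ c ≤ c * 2 ^ (c - 1) * b ^ (c - 1) * w := by
  refine (key_aux hc hb hw).trans ?_
  have h2 : ((2:ℝ)) ^ (c-1) * b ^ (c-1) = (2 * b) ^ (c - 1) :=
    (Real.mul_rpow (by norm_num) hb).symm
  have h1 : (b + w) ^ (c-1) ≤ (2 * b) ^ (c - 1) :=
    Real.rpow_le_rpow (by linarith) (by linarith) (by linarith)
  calc c * (b + w) ^ (c-1) * w ≤ c * (2 * b) ^ (c-1) * w :=
        mul_le_mul_of_nonneg_right (mul_le_mul_of_nonneg_left h1 (by linarith)) hw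
    _ = c * 2 ^ (c-1) * b ^ (c-1) * w := by rw [← h2]; ring

/-- For every real `c > 1` there exist `k : ℕ`, exponents `t 1 < ... < t k` in `[1, c)`,
and power functions `f i b = C i * b ^ s i` with `C i > 0` and `0 ≤ s i < c`, such that
`(b+w)^c - b^c - w^c ≤ ∑ i, C i * b ^ s i * w ^ t i` for all `b, w ≥ 0`. -/
theorem stmt_1 (c : ℝ) (hc : 1 < c) :
    ∃ (k : ℕ) (t C s : Fin k → ℝ),
      StrictMono t ∧
      (∀ i, 1 ≤ t i ∧ t i < c) ∧
      (∀ i, 0 < C i) ∧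
      (∀ i, 0 ≤ s i ∧ s i < c) ∧
      ∀ b w : ℝ, 0 ≤ b → 0 ≤ w →
        (b + w) ^ c - b ^ c - w ^ c ≤ ∑ i, C i * b ^ s i * w ^ t i := by
  have h2pos : (0:ℝ) < 2 ^ (c-1) := Real.rpow_pos_of_pos two_pos _
  have hK : (0:ℝ) < c * 2 ^ (c-1) := by positivity
  rcases le_or_gt c 2 with hc2 | hc2
  · -- one term: C = c·2^{c-1}, s = c-1, t = 1
    refine ⟨1, ![1], ![c * 2 ^ (c-1)], ![c-1], Subsingleton.strictMono _,
      ?_, ?_, ?_, fun b w hb hw => ?_⟩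
    · intro i; fin_cases i; constructor <;> simp <;> linarith
    · intro i; fin_cases i; simpa using hK
    · intro i; fin_cases i; constructor <;> simp <;> linarith
    simp only [Fin.sum_univ_one, Matrix.cons_val_zero, Real.rpow_one]
    have hwc : 0 ≤ w ^ c := Real.rpow_nonneg hw c
    have hbc : 0 ≤ b ^ c := Real.rpow_nonneg hb c
    rcases le_total w b with hwb | hbw
    · have := key2 hc.le hb hw hwb
      linarith
    · have h := key2 hc.le hw hb hbw
      rw [add_comm w b] at h
      have hswap : w ^ (c-1) * b ≤ b ^ (c-1) * w := by
        rcases eq_or_lt_of_le hb with hb0 | hb0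
        · simp [← hb0]
          exact mul_nonneg (Real.rpow_nonneg le_rfl _) hw
        · have hwpos : 0 < w := lt_of_lt_of_le hb0 hbw
          rw [show w = b * (w / b) by field_simp]
          have hq1 : (1:ℝ) ≤ w / b := (one_le_div hb0).mpr hbw
          have hqr : (w/b) ^ (c-1) ≤ w / b := by
            have := Real.rpow_le_rpow_of_exponent_le hq1 (by linarith : c - 1 ≤ 1)
            rwa [Real.rpow_one] at this
          rw [Real.mul_rpow hb0.le (by positivity)]
          calc b ^ (c-1) * (w/b) ^ (c-1) * b ≤ b ^ (c-1) * (w/b) * b := by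
                gcongr
            _ = b ^ (c-1) * (b * (w/b)) := by ring
      nlinarith
  · -- two terms
    refine ⟨2, ![1, c-1], ![c * 2 ^ (c-1), c * 2 ^ (c-1)], ![c-1, 1], ?_,
      ?_, ?_, ?_, fun b w hb hw => ?_⟩
    · intro i j hij
      fin_cases i <;> fin_cases j <;> simp_all <;> linarith
    · intro i; fin_cases i <;> constructor <;> simp <;> linarith
    · intro i; fin_cases i <;> simpa using hK
    · intro i; fin_cases i <;> constructor <;> simp <;> linarith
    · simp only [Fin.sum_univ_two, Matrix.cons_val_zero, Matrix.cons_val_one, Matrix.head_cons,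
        Real.rpow_one]
      have hwc : 0 ≤ w ^ c := Real.rpow_nonneg hw c
      have hbc : 0 ≤ b ^ c := Real.rpow_nonneg hb c
      have hn1 : 0 ≤ c * 2 ^ (c-1) * b ^ (c-1) * w := by
        have := Real.rpow_nonneg hb (c-1); positivity
      have hn2 : 0 ≤ c * 2 ^ (c-1) * w ^ (c-1) * b := by
        have := Real.rpow_nonneg hw (c-1); positivity
      rcases le_total w b with hwb | hbw
      · have := key2 hc.le hb hw hwb
        linarith
      · have h := key2 hc.le hw hb hbw
        rw [add_comm w b] at h
        linarith
end

section
/- Let F(M) = K₀M - Σ_i(K_i M^{c_i} + Σ_j K_{ij} M^{t_{ij}}) with K₀, K_i, K_{ij} > 0 and all exponents c_i, t_{ij} > 1, and let m₀ > 0 be its unique positive zero. Then there exists δ > 0 such that for every C ∈ [0, δ], the solution set {M ≥ 0 : F(M) ≤ C} is contained in [0, (2/K₀)·C] ∪ [b_C, ∞) for some b_C > m₀/2; moreover the left endpoint a_C of the small-solution interval satisfies a_C → 0 and b_C → m₀ monotonically as C decreases to 0. -/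
open Filter Topology

lemma aux_convexOn_sum {ι : Type*} (s : Finset ι) (f : ι → ℝ → ℝ)
    (h : ∀ i ∈ s, ConvexOn ℝ (Set.Ici 0) (f i)) :
    ConvexOn ℝ (Set.Ici 0) (fun x => ∑ i ∈ s, f i x) := by
  classical
  induction s using Finset.induction with
  | empty => simpa using convexOn_const (0:ℝ) (convex_Ici (0:ℝ))
  | insert _ _ hx ih =>
    simp only [Finset.sum_insert hx]
    exact (h _ (Finset.mem_insert_self _ _)).add
      (ih fun i hi => h i (Finset.mem_insert_of_mem hi))

lemma aux_rpow_tendsto (p : ℝ) (hp : 0 < p) :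
    Tendsto (fun x : ℝ => x ^ p) (𝓝[>] 0) (𝓝 0) := by
  have h := (Real.continuousAt_rpow_const 0 p (Or.inr hp.le)).tendsto
  rw [Real.zero_rpow hp.ne'] at h
  exact h.mono_left nhdsWithin_le_nhds

set_option maxHeartbeats 1000000

/-- Let `F M = K₀·M - ∑ i (K i · M^(c i) + ∑ j, Kij i j · M^(t i j))` with positive
coefficients and exponents `> 1`, and let `m₀ > 0` be its unique positive zero. Then
there exists `δ > 0` and endpoint functions `a, b` such that for every `C ∈ [0, δ]`,
`{M ≥ 0 : F M ≤ C} ⊆ [0, a C] ∪ [b C, ∞)` with `a C ≤ (2/K₀)·C` and `b C > m₀/2`;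
moreover `a` is monotone, `b` is antitone on `[0, δ]`, and `a C → 0`, `b C → m₀` as
`C ↓ 0`. -/
theorem stmt_10 (N : ℕ) (hN : 1 ≤ N) (J : Fin N → ℕ)
    (K₀ : ℝ) (hK₀ : 0 < K₀)
    (K : Fin N → ℝ) (hK : ∀ i, 0 < K i)
    (Kij : (i : Fin N) → Fin (J i) → ℝ) (hKij : ∀ i j, 0 < Kij i j)
    (c : Fin N → ℝ) (hc : ∀ i, 1 < c i)
    (t : (i : Fin N) → Fin (J i) → ℝ) (ht : ∀ i j, 1 < t i j)
    (F : ℝ → ℝ)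
    (hF : ∀ M : ℝ, 0 ≤ M →
      F M = K₀ * M - ∑ i, (K i * M ^ (c i) + ∑ j, Kij i j * M ^ (t i j)))
    (m₀ : ℝ) (hm₀ : 0 < m₀) (hFm₀ : F m₀ = 0)
    (huniq : ∀ M : ℝ, 0 < M → F M = 0 → M = m₀) :
    ∃ δ : ℝ, 0 < δ ∧ ∃ a b : ℝ → ℝ,
      (∀ C ∈ Set.Icc (0 : ℝ) δ,
        {M : ℝ | 0 ≤ M ∧ F M ≤ C} ⊆ Set.Icc 0 (a C) ∪ Set.Ici (b C) ∧
        a C ≤ 2 / K₀ * C ∧ m₀ / 2 < b C) ∧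
      MonotoneOn a (Set.Icc 0 δ) ∧
      AntitoneOn b (Set.Icc 0 δ) ∧
      Tendsto a (nhdsWithin 0 (Set.Ioi 0)) (nhds 0) ∧
      Tendsto b (nhdsWithin 0 (Set.Ioi 0)) (nhds m₀) := by
  set G : ℝ → ℝ := fun M => ∑ i, (K i * M ^ (c i) + ∑ j, Kij i j * M ^ (t i j)) with hG
  have hFG : ∀ M : ℝ, 0 ≤ M → F M = K₀ * M - G M := hF
  -- convexity of G
  have hGconv : ConvexOn ℝ (Set.Ici 0) G := by
    apply aux_convexOn_sum
    intro i _
    have h1 : ConvexOn ℝ (Set.Ici 0) (fun M : ℝ => K i * M ^ (c i)) := by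
      simpa [smul_eq_mul] using (convexOn_rpow (hc i).le).smul (hK i).le
    refine h1.add (aux_convexOn_sum _ _ fun j _ => ?_)
    simpa [smul_eq_mul] using (convexOn_rpow (ht i j).le).smul (hKij i j).le
  -- the "slope" function H with G M = M * H M for M > 0
  set H : ℝ → ℝ := fun M => ∑ i, (K i * M ^ (c i - 1) + ∑ j, Kij i j * M ^ (t i j - 1))
    with hH
  have hGH : ∀ M : ℝ, 0 < M → G M = M * H M := by
    intro M hM
    have key : ∀ p : ℝ, M * M ^ (p - 1) = M ^ p := by
      intro p
      rw [Real.rpow_sub hM, Real.rpow_one]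
      field_simp
    simp only [hG, hH, Finset.mul_sum, mul_add]
    refine Finset.sum_congr rfl fun i _ => ?_
    congr 1
    · rw [mul_left_comm, key]
    · exact Finset.sum_congr rfl fun j _ => by rw [mul_left_comm, key]
  -- H tends to 0 at 0⁺
  have hHtend : Tendsto H (𝓝[>] (0:ℝ)) (𝓝 0) := by
    have : Tendsto H (𝓝[>] (0:ℝ))
        (𝓝 (∑ i : Fin N, ((K i * 0) + ∑ j : Fin (J i), Kij i j * 0))) := by
      refine tendsto_finset_sum _ fun i _ => Tendsto.add ?_ (tendsto_finset_sum _ fun j _ => ?_)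
      · exact (aux_rpow_tendsto _ (by linarith [hc i])).const_mul _
      · exact (aux_rpow_tendsto _ (by linarith [ht i j])).const_mul _
    simpa using this
  -- pick s
  have hev : ∀ᶠ M in 𝓝[>] (0:ℝ), H M < K₀ / 2 :=
    hHtend.eventually (gt_mem_nhds (by positivity))
  have hev2 : ∀ᶠ M in 𝓝[>] (0:ℝ), M ∈ Set.Ioo (0:ℝ) (m₀ / 2) :=
    Ioo_mem_nhdsGT_of_mem ⟨le_rfl, by positivity⟩
  obtain ⟨s, hHs, hs0, hsm⟩ : ∃ s : ℝ, H s < K₀ / 2 ∧ 0 < s ∧ s < m₀ / 2 := by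
    obtain ⟨s, h1, h2⟩ := (hev.and hev2).exists
    exact ⟨s, h1, h2.1, h2.2⟩
  have hsm₀ : s < m₀ := by linarith
  have hd : (0:ℝ) < m₀ - s := by linarith
  -- H is monotone on [0, s]
  have hHmono : ∀ M : ℝ, 0 ≤ M → M ≤ s → H M ≤ H s := by
    intro M hM hMs
    refine Finset.sum_le_sum fun i _ => add_le_add ?_ (Finset.sum_le_sum fun j _ => ?_)
    · exact mul_le_mul_of_nonneg_left
        (Real.rpow_le_rpow hM hMs (by linarith [hc i])) (hK i).le
    · exact mul_le_mul_of_nonneg_left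
        (Real.rpow_le_rpow hM hMs (by linarith [ht i j])) (hKij i j).le
  -- basic values
  have hGm₀ : G m₀ = K₀ * m₀ := by
    have := hFG m₀ hm₀.le; rw [hFm₀] at this; linarith
  have hGs : G s ≤ K₀ / 2 * s := by
    rw [hGH s hs0]
    calc s * H s ≤ s * (K₀ / 2) := by nlinarith
    _ = K₀ / 2 * s := by ring
  have hFs : 0 < F s := by
    rw [hFG s hs0.le]; nlinarith
  set lam : ℝ := (m₀ - s) / F s with hlam
  have hlam0 : 0 ≤ lam := div_nonneg hd.le hFs.le
  refine ⟨min (K₀ * s / 2) (m₀ * F s / (4 * (m₀ - s))), by positivity,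
    fun C => 2 / K₀ * C, fun C => m₀ - lam * C, ?_, ?_, ?_, ?_, ?_⟩
  · rintro C ⟨hC0, hCδ⟩
    have hCδ1 : C ≤ K₀ * s / 2 := hCδ.trans (min_le_left _ _)
    have hCδ2 : C ≤ m₀ * F s / (4 * (m₀ - s)) := hCδ.trans (min_le_right _ _)
    have hlamC : lam * C ≤ m₀ / 4 := by
      have h1 : lam * C ≤ lam * (m₀ * F s / (4 * (m₀ - s))) :=
        mul_le_mul_of_nonneg_left hCδ2 hlam0
      have h2 : lam * (m₀ * F s / (4 * (m₀ - s))) = m₀ / 4 := by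
        rw [hlam]; field_simp
      linarith
    refine ⟨?_, le_refl _, by nlinarith⟩
    rintro M ⟨hM0, hFM⟩
    by_cases hMa : M ≤ 2 / K₀ * C
    · exact Or.inl ⟨hM0, hMa⟩
    push_neg at hMa
    right
    have hM0' : 0 < M := lt_of_le_of_lt (by positivity) hMa
    -- M cannot be in (a C, s]
    have hMs : s < M := by
      by_contra hle
      push_neg at hle
      have hGM : G M ≤ K₀ / 2 * M := by
        rw [hGH M hM0']
        have := hHmono M hM0'.le hle
        nlinarith
      have : K₀ * (2 / K₀ * C) = 2 * C := by field_simp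
      have hFMge : K₀ / 2 * M ≤ F M := by rw [hFG M hM0'.le]; linarith
      nlinarith
    rcases le_or_gt m₀ M with hMm | hMm
    · simp only [Set.mem_Ici]
      nlinarith
    -- concavity argument on [s, m₀]
    set θ : ℝ := (m₀ - M) / (m₀ - s) with hθ
    have hθd : θ * (m₀ - s) = m₀ - M := div_mul_cancel₀ _ hd.ne'
    have hθ0 : 0 ≤ θ := div_nonneg (by linarith) hd.le
    have hθ1 : θ ≤ 1 := by rw [div_le_one hd]; linarith
    have hcomb : θ • s + (1 - θ) • m₀ = M := by
      simp only [smul_eq_mul]; linear_combination (-1 : ℝ) * hθd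
    have h1θ : (0:ℝ) ≤ 1 - θ := by linarith
    have hsum : θ + (1 - θ) = 1 := by ring
    have hGM : G M ≤ θ * G s + (1 - θ) * G m₀ := by
      have h := hGconv.2 (Set.mem_Ici.mpr hs0.le) (Set.mem_Ici.mpr hm₀.le)
        hθ0 h1θ hsum
      rw [hcomb] at h
      simpa [smul_eq_mul] using h
    have hKM : K₀ * M = θ * (K₀ * s) + (1 - θ) * (K₀ * m₀) := by
      rw [← hcomb]; simp only [smul_eq_mul]; ring
    have hFMge : θ * F s ≤ F M := by
      rw [hFG M hM0'.le, hFG s hs0.le]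
      nlinarith
    have hθle : θ ≤ C / F s := (le_div_iff₀ hFs).mpr (by linarith)
    have : m₀ - M ≤ lam * C := by
      rw [← hθd, hlam]
      calc θ * (m₀ - s) ≤ C / F s * (m₀ - s) := mul_le_mul_of_nonneg_right hθle hd.le
      _ = (m₀ - s) / F s * C := by ring
    simpa [Set.mem_Ici] using by linarith
  · intro x hx y hy hxy
    exact mul_le_mul_of_nonneg_left hxy (by positivity)
  · intro x hx y hy hxy
    have := mul_le_mul_of_nonneg_left hxy hlam0
    simp only
    linarith
  · have h : Tendsto (fun C : ℝ => 2 / K₀ * C) (𝓝 0) (𝓝 (2 / K₀ * 0)) :=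
      (continuous_const.mul continuous_id).tendsto 0
    simpa using h.mono_left nhdsWithin_le_nhds
  · have h : Tendsto (fun C : ℝ => m₀ - lam * C) (𝓝 0) (𝓝 (m₀ - lam * 0)) :=
      (continuous_const.sub (continuous_const.mul continuous_id)).tendsto 0
    simpa using h.mono_left nhdsWithin_le_nhds
end
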